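/- Discrete analogue of Theorem 3.1 (soundness of OLEM): in a discrete structural equation model, assume that for every topological order σ of G, every m ∈ [d], and all i, j ∈ σ[1:m] such that i is a sink of G^{σ[1:m]} while j is not, one has I(V_j ; (V_l)_{l∈Des_j^{σ[1:m]}} | (V_l)_{l∈W_j^{σ[1:m]}}) > H(ε_j) − H(ε_i). Let π be any permutation of [d] such that for every m ∈ [d], H(V_{π(m)} | (V_l)_{l∈π[1:m], l≠π(m)}) = max_{i∈π[1:m]} H(V_i | (V_l)_{l∈π[1:m], l≠i}). Then π is a topological order of G. -/

import Mathlib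

open MeasureTheory

attribute [local instance] Classical.propDecidable

/-- Shannon entropy of a finite-valued random variable. -/
noncomputable def entropy {Ω : Type*} [MeasurableSpace Ω] (P : Measure Ω)
    {T : Type*} [Fintype T] (X : Ω → T) : ℝ :=
  ∑ x : T, Real.negMulLog ((P (X ⁻¹' {x})).toReal)

/-- Conditional entropy H(Y|X) := H(X,Y) − H(X). -/
noncomputable def condEntropy {Ω : Type*} [MeasurableSpace Ω] (P : Measure Ω)
    {S T : Type*} [Fintype S] [Fintype T] (X : Ω → S) (Y : Ω → T) : ℝ :=
  entropy P (fun ω => (X ω, Y ω)) - entropy P X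

/-- Conditional mutual information I(Y;Z|X) := H(Y|X) − H(Y|X,Z). -/
noncomputable def condMutualInfo {Ω : Type*} [MeasurableSpace Ω] (P : Measure Ω)
    {S T U : Type*} [Fintype S] [Fintype T] [Fintype U]
    (X : Ω → S) (Y : Ω → T) (Z : Ω → U) : ℝ :=
  condEntropy P X Y - condEntropy P (fun ω => (X ω, Z ω)) Y
section Aux
variable {Ω : Type*} [MeasurableSpace Ω] (P : Measure Ω) [IsProbabilityMeasure P]

lemma sum_toReal_measure_preimage {T : Type*} [Fintype T] (X : Ω → T)
    (hX : ∀ x : T, MeasurableSet (X ⁻¹' {x})) :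
    ∑ x : T, (P (X ⁻¹' {x})).toReal = 1 := by
  rw [← ENNReal.toReal_sum (fun a _ => measure_ne_top P _),
    MeasureTheory.sum_measure_preimage_singleton Finset.univ (fun x _ => hX x)]
  simp

lemma entropy_comp_inj {S T : Type*} [Fintype S] [Fintype T] (X : Ω → S) (φ : S → T)
    (hφ : Function.Injective φ) :
    entropy P (fun ω => φ (X ω)) = entropy P X := by
  unfold entropy
  have h1 : ∀ x : S, (fun ω => φ (X ω)) ⁻¹' {φ x} = X ⁻¹' {x} := by
    intro x; ext ω; simp [hφ.eq_iff]
  calc ∑ y : T, Real.negMulLog ((P ((fun ω => φ (X ω)) ⁻¹' {y})).toReal)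
      = ∑ y ∈ Finset.univ.image φ,
          Real.negMulLog ((P ((fun ω => φ (X ω)) ⁻¹' {y})).toReal) := by
        refine (Finset.sum_subset (Finset.subset_univ _) ?_).symm
        intro y _ hy
        have : (fun ω => φ (X ω)) ⁻¹' {y} = ∅ := by
          ext ω
          simp only [Set.mem_preimage, Set.mem_singleton_iff, Set.mem_empty_iff_false, iff_false]
          intro h
          exact hy (Finset.mem_image.2 ⟨X ω, Finset.mem_univ _, h⟩)
        rw [this]; simp
    _ = ∑ x : S, Real.negMulLog ((P ((fun ω => φ (X ω)) ⁻¹' {φ x})).toReal) :=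
        Finset.sum_image (fun x _ y _ h => hφ h)
    _ = ∑ x : S, Real.negMulLog ((P (X ⁻¹' {x})).toReal) := by simp_rw [h1]


lemma entropy_comp_inj' {S T : Type*} [Fintype S] [Fintype T] (X : Ω → S) (Y : Ω → T)
    (φ : S → T) (hφ : Function.Injective φ) (h : ∀ ω, Y ω = φ (X ω)) :
    entropy P Y = entropy P X := by
  have hY : Y = fun ω => φ (X ω) := funext h
  rw [hY]
  exact entropy_comp_inj P X φ hφ

lemma condEntropy_shift {S A : Type*} [Fintype S] [Fintype A] [AddCommGroup A]
    (X : Ω → S) (e : Ω → A) (g : S → A)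
    (hX : ∀ x : S, MeasurableSet (X ⁻¹' {x}))
    (he : ∀ a : A, MeasurableSet (e ⁻¹' {a}))
    (hprod : ∀ (x : S) (a : A), P (X ⁻¹' {x} ∩ e ⁻¹' {a}) = P (X ⁻¹' {x}) * P (e ⁻¹' {a})) :
    condEntropy P X (fun ω => g (X ω) + e ω) = entropy P e := by
  have hfib : ∀ (x : S) (y : A),
      (fun ω => (X ω, g (X ω) + e ω)) ⁻¹' {(x, y)} = X ⁻¹' {x} ∩ e ⁻¹' {y - g x} := by
    intro x y
    ext ω
    simp only [Set.mem_preimage, Set.mem_singleton_iff, Prod.mk.injEq, Set.mem_inter_iff]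
    constructor
    · rintro ⟨h1, h2⟩
      refine ⟨h1, ?_⟩
      rw [h1] at h2
      have := congrArg (fun z => z - g x) h2
      simpa using this
    · rintro ⟨h1, h2⟩
      refine ⟨h1, ?_⟩
      rw [h1, h2]
      simp
  have key : entropy P (fun ω => (X ω, g (X ω) + e ω)) = entropy P X + entropy P e := by
    unfold entropy
    rw [Fintype.sum_prod_type]
    have hx1 : ∑ x : S, (P (X ⁻¹' {x})).toReal = 1 := sum_toReal_measure_preimage P X hX
    have he1 : ∑ a : A, (P (e ⁻¹' {a})).toReal = 1 := sum_toReal_measure_preimage P e he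
    calc ∑ x : S, ∑ y : A,
          Real.negMulLog ((P ((fun ω => (X ω, g (X ω) + e ω)) ⁻¹' {(x, y)})).toReal)
        = ∑ x : S, ∑ a : A,
            Real.negMulLog ((P (X ⁻¹' {x})).toReal * (P (e ⁻¹' {a})).toReal) := by
          refine Finset.sum_congr rfl fun x _ => ?_
          rw [← Equiv.sum_comp (Equiv.addRight (g x))
            (fun y => Real.negMulLog ((P ((fun ω => (X ω, g (X ω) + e ω)) ⁻¹' {(x, y)})).toReal))]
          refine Finset.sum_congr rfl fun a _ => ?_
          simp only [Equiv.coe_addRight]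
          rw [hfib, hprod, add_sub_cancel_right, ENNReal.toReal_mul]
        _ = ∑ x : S, ∑ a : A,
            ((P (e ⁻¹' {a})).toReal * Real.negMulLog ((P (X ⁻¹' {x})).toReal)
              + (P (X ⁻¹' {x})).toReal * Real.negMulLog ((P (e ⁻¹' {a})).toReal)) := by
          simp_rw [Real.negMulLog_mul]
        _ = entropy P X + entropy P e := by
          unfold entropy
          simp_rw [Finset.sum_add_distrib, ← Finset.sum_mul, ← Finset.mul_sum]
          simp only [he1, one_mul]
          rw [← Finset.sum_mul, hx1, one_mul]
  unfold condEntropy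
  rw [key]; ring
end Aux
noncomputable def Gdef {d : ℕ} {A : Type*} [Add A] (E : Fin d → Fin d → Prop)
    (hwf : WellFounded (fun a b : Fin d => E a b))
    (f : (i : Fin d) → ({j : Fin d // E j i} → A) → A) :
    Fin d → (Fin d → A) → A :=
  hwf.fix (C := fun _ => (Fin d → A) → A)
    (fun l IH e => f l (fun p => IH p.1 p.2 e) + e l)

lemma Gdef_eq {d : ℕ} {A : Type*} [Add A] (E : Fin d → Fin d → Prop)
    (hwf : WellFounded (fun a b : Fin d => E a b))
    (f : (i : Fin d) → ({j : Fin d // E j i} → A) → A) (l : Fin d) (e : Fin d → A) :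
    Gdef E hwf f l e = f l (fun p => Gdef E hwf f p.1 e) + e l := by
  unfold Gdef
  rw [WellFounded.fix_eq]

lemma V_eq_Gdef {d : ℕ} {Ω A : Type*} [Add A] (E : Fin d → Fin d → Prop)
    (hwf : WellFounded (fun a b : Fin d => E a b))
    (f : (i : Fin d) → ({j : Fin d // E j i} → A) → A)
    (ε : Fin d → Ω → A) (V : Fin d → Ω → A)
    (hV : ∀ i ω, V i ω = f i (fun j => V j.1 ω) + ε i ω) (l : Fin d) (ω : Ω) :
    V l ω = Gdef E hwf f l (fun k => ε k ω) := by
  induction l using hwf.induction with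
  | _ l IH =>
    rw [hV, Gdef_eq]
    congr 1
    · congr 1
      funext p
      exact IH p.1 p.2

lemma Gdef_congr {d : ℕ} {A : Type*} [Add A] (E : Fin d → Fin d → Prop)
    (hwf : WellFounded (fun a b : Fin d => E a b))
    (f : (i : Fin d) → ({j : Fin d // E j i} → A) → A) (l : Fin d) (e e' : Fin d → A)
    (h : ∀ k, Relation.ReflTransGen E k l → e k = e' k) :
    Gdef E hwf f l e = Gdef E hwf f l e' := by
  induction l using hwf.induction with
  | _ l IH =>
    rw [Gdef_eq, Gdef_eq]
    congr 1
    · congr 1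
      funext p
      exact IH p.1 p.2 (fun k hk => h k (hk.tail p.2))
    · exact h l Relation.ReflTransGen.refl

lemma indep_tuple {d : ℕ} {Ω A : Type*} [MeasurableSpace Ω] {P : Measure Ω}
    (E : Fin d → Fin d → Prop) (hwf : WellFounded (fun a b : Fin d => E a b))
    [Fintype A] [AddCommGroup A] [MeasurableSpace A] [MeasurableSingletonClass A]
    (ε : Fin d → Ω → A) (hεmeas : ∀ i, Measurable (ε i))
    (hindep : ProbabilityTheory.iIndepFun ε P)
    (f : (i : Fin d) → ({j : Fin d // E j i} → A) → A)
    (V : Fin d → Ω → A)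
    (hV : ∀ i ω, V i ω = f i (fun j => V j.1 ω) + ε i ω)
    (j : Fin d) (Q : Fin d → Prop) (hQ : ∀ l, Q l → ¬ Relation.ReflTransGen E j l) :
    ProbabilityTheory.IndepFun (fun ω => fun l : {l : Fin d // Q l} => V l.1 ω) (ε j) P := by
  classical
  set K : Finset (Fin d) := Finset.univ.erase j with hK
  set J : Finset (Fin d) := {j} with hJ
  have hdisj : Disjoint K J := by
    simp [hK, hJ, Finset.disjoint_singleton_right]
  have base := hindep.indepFun_finset K J hdisj hεmeas
  set F : ((k : K) → A) → ({l : Fin d // Q l} → A) :=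
    fun u l => Gdef E hwf f l.1 (fun k => if h : k ∈ K then u ⟨k, h⟩ else 0) with hF
  set G : ((k : J) → A) → A := fun v => v ⟨j, Finset.mem_singleton_self j⟩ with hG
  have hFmeas : Measurable F := measurable_of_countable F
  have hGmeas : Measurable G := measurable_of_countable G
  have h1 : (fun ω => fun l : {l : Fin d // Q l} => V l.1 ω)
      = F ∘ (fun a (i : K) => ε i a) := by
    funext ω
    funext l
    simp only [Function.comp_apply, hF]
    rw [V_eq_Gdef E hwf f ε V hV l.1 ω]
    refine Gdef_congr E hwf f l.1 _ _ ?_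
    intro k hk
    have hkj : k ≠ j := by
      rintro rfl
      exact hQ l.1 l.2 hk
    rw [dif_pos (Finset.mem_erase.2 ⟨hkj, Finset.mem_univ _⟩)]
  have h2 : ε j = G ∘ (fun a (i : J) => ε i a) := rfl
  rw [h1, h2]
  exact base.comp hFmeas hGmeas
lemma exists_topo_prefix {d : ℕ} (E : Fin d → Fin d → Prop)
    (hacyc : ∀ i, ¬ Relation.TransGen E i i)
    (S : Set (Fin d)) (hS : ∀ a b, Relation.TransGen E a b → b ∈ S → a ∈ S)
    (m : Fin d) (F : Finset (Fin d)) (hFS : ∀ l, l ∈ F ↔ l ∈ S)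
    (hcard : F.card = m.val + 1) :
    ∃ σ : Equiv.Perm (Fin d), (∀ a b, Relation.TransGen E a b → σ.symm a < σ.symm b) ∧
      ∀ l, σ.symm l ≤ m ↔ l ∈ S := by
  classical
  set s : Fin d → Fin d → Prop :=
    fun a b => Relation.TransGen E a b ∨ (a ∈ S ∧ b ∉ S) with hs
  have strans : ∀ a b c, s a b → s b c → s a c := by
    rintro a b c (hab | ⟨haS, hbS⟩) (hbc | ⟨hbS', hcS⟩)
    · exact Or.inl (hab.trans hbc)
    · exact Or.inr ⟨hS a b hab hbS', hcS⟩
    · exact Or.inr ⟨haS, fun hc => hbS (hS b c hbc hc)⟩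
    · exact absurd hbS' hbS
  have sirrefl : ∀ a, ¬ s a a := by
    rintro a (h | ⟨h1, h2⟩)
    · exact hacyc a h
    · exact h2 h1
  set r : Fin d → Fin d → Prop := fun a b => s a b ∨ a = b with hr
  haveI : IsPartialOrder (Fin d) r :=
    { refl := fun a => Or.inr rfl
      trans := by
        rintro a b c (hab | rfl) (hbc | rfl)
        · exact Or.inl (strans a b c hab hbc)
        · exact Or.inl hab
        · exact Or.inl hbc
        · exact Or.inr rfl
      antisymm := by
        rintro a b (hab | rfl) (hba | h)
        · exact absurd (strans a b a hab hba) (sirrefl a)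
        · exact h.symm
        · rfl
        · rfl }
  obtain ⟨t, hlin, hrt⟩ := extend_partialOrder r
  haveI := hlin
  haveI : DecidableRel t := fun _ _ => Classical.propDecidable _
  have hlen : (Finset.sort Finset.univ t).length = d := by
    rw [Finset.length_sort, Finset.card_univ, Fintype.card_fin]
  set g : Fin d → Fin d := fun k => (Finset.sort Finset.univ t).get (Fin.cast hlen.symm k)
    with hg
  have hginj : Function.Injective g := by
    intro a b h
    have h2 := List.nodup_iff_injective_get.1 (Finset.sort_nodup Finset.univ t) h
    have h3 := congrArg Fin.val h2
    simp only [Fin.coe_cast] at h3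
    exact Fin.ext h3
  have hgbij := Finite.injective_iff_bijective.1 hginj
  set σ : Equiv.Perm (Fin d) := Equiv.ofBijective g hgbij with hσ
  have happ : ∀ x, g (σ.symm x) = x := fun x => σ.apply_symm_apply x
  have hidx : ∀ a b, s a b → σ.symm a < σ.symm b := by
    intro a b hab
    have hne : a ≠ b := fun h => sirrefl a (h ▸ hab)
    have hta : t a b := hrt a b (Or.inl hab)
    by_contra hle
    push_neg at hle
    have hne' : σ.symm b ≠ σ.symm a := fun h => hne (by rw [← happ a, ← happ b, h])
    have hlt : σ.symm b < σ.symm a := lt_of_le_of_ne hle hne'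
    have hsor := (Finset.pairwise_sort Finset.univ t).rel_get_of_lt
      (a := Fin.cast hlen.symm (σ.symm b)) (b := Fin.cast hlen.symm (σ.symm a))
      (by simp only [Fin.lt_def, Fin.coe_cast]; exact hlt)
    have hba : t b a := by
      have e1 : (Finset.sort Finset.univ t).get (Fin.cast hlen.symm (σ.symm b)) = b := happ b
      have e2 : (Finset.sort Finset.univ t).get (Fin.cast hlen.symm (σ.symm a)) = a := happ a
      rw [e1, e2] at hsor
      exact hsor
    exact hne (_root_.antisymm hta hba)
  refine ⟨σ, fun a b h => hidx a b (Or.inl h), fun l => ⟨?_, ?_⟩⟩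
  · intro hle
    by_contra hls
    have hmapsto : ∀ a ∈ S, σ.symm a < σ.symm l := fun a ha => hidx a l (Or.inr ⟨ha, hls⟩)
    have hcle : F.card ≤ (Finset.Iio (σ.symm l)).card := by
      refine Finset.card_le_card_of_injOn (fun a => σ.symm a) ?_ ?_
      · intro a ha
        exact Finset.mem_Iio.2 (hmapsto a ((hFS a).1 ha))
      · intro a _ b _ h
        exact σ.symm.injective h
    rw [hcard, Fin.card_Iio] at hcle
    have hv : (σ.symm l).val ≤ m.val := hle
    omega
  · intro hlS
    by_contra hgt
    push_neg at hgt
    have hmapsto : ∀ b, b ∉ S → σ.symm l < σ.symm b := fun b hb => hidx l b (Or.inr ⟨hlS, hb⟩)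
    have hcardc : (Finset.univ \ F).card = d - (m.val + 1) := by
      rw [Finset.card_sdiff_of_subset (Finset.subset_univ F), Finset.card_univ, Fintype.card_fin, hcard]
    have hcle : (Finset.univ \ F).card ≤ (Finset.Ioi (σ.symm l)).card := by
      refine Finset.card_le_card_of_injOn (fun a => σ.symm a) ?_ ?_
      · intro a ha
        have haS : a ∉ S := fun hs => (Finset.mem_sdiff.1 ha).2 ((hFS a).2 hs)
        exact Finset.mem_Ioi.2 (hmapsto a haS)
      · intro a _ b _ h
        exact σ.symm.injective h
    rw [hcardc, Fin.card_Ioi] at hcle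
    have h1 : m.val < (σ.symm l).val := hgt
    have h2 : (σ.symm l).val < d := (σ.symm l).isLt
    have h3 : m.val < d := m.isLt
    omega
/-- Discrete analogue of Theorem 3.1 (soundness of OLEM): under the OLEM
assumption, any permutation `π` such that, for every `m`, the node `π(m)`
maximizes the conditional entropy given the other variables of the prefix
`π[1:m]` over that prefix, is a topological order of `G`. -/
theorem stmt12 {d : ℕ} (E : Fin d → Fin d → Prop)
    (hacyc : ∀ i, ¬ Relation.TransGen E i i)
    {Ω A : Type*} [MeasurableSpace Ω] (P : Measure Ω) [IsProbabilityMeasure P]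
    [Fintype A] [AddCommGroup A] [MeasurableSpace A] [MeasurableSingletonClass A]
    (ε : Fin d → Ω → A) (hεmeas : ∀ i, Measurable (ε i))
    (hindep : ProbabilityTheory.iIndepFun ε P)
    (f : (i : Fin d) → ({j : Fin d // E j i} → A) → A)
    (V : Fin d → Ω → A) (hVmeas : ∀ i, Measurable (V i))
    (hV : ∀ i ω, V i ω = f i (fun j => V j.1 ω) + ε i ω)
    (hyp : ∀ σ : Equiv.Perm (Fin d),
      (∀ a b, Relation.TransGen E a b → σ.symm a < σ.symm b) →
      ∀ m : Fin d, ∀ i j : Fin d, σ.symm i ≤ m → σ.symm j ≤ m →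
        (∀ l, σ.symm l ≤ m → ¬ E i l) →
        (∃ l, σ.symm l ≤ m ∧ E j l) →
        entropy P (ε j) - entropy P (ε i)
          < condMutualInfo P
              (fun ω =>
                fun l : {l : Fin d // (σ.symm l ≤ m ∧ l ≠ j) ∧ ¬ Relation.TransGen E j l} =>
                  V l.1 ω)
              (V j)
              (fun ω => fun l : {l : Fin d // σ.symm l ≤ m ∧ Relation.TransGen E j l} =>
                V l.1 ω))
    (π : Equiv.Perm (Fin d))
    (hmax : ∀ m : Fin d, ∀ i : Fin d, π.symm i ≤ m →
      condEntropy P (fun ω => fun l : {l : Fin d // π.symm l ≤ m ∧ l ≠ i} => V l.1 ω) (V i)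
        ≤ condEntropy P
            (fun ω => fun l : {l : Fin d // π.symm l ≤ m ∧ l ≠ π m} => V l.1 ω) (V (π m))) :
    ∀ a b, Relation.TransGen E a b → π.symm a < π.symm b := by
  classical
  haveI ht1 : IsTrans (Fin d) (Relation.TransGen E) := ⟨fun _ _ _ => Relation.TransGen.trans⟩
  haveI ht2 : IsIrrefl (Fin d) (Relation.TransGen E) := ⟨hacyc⟩
  have hwfT : WellFounded (Relation.TransGen E) := Finite.wellFounded_of_trans_of_irrefl _
  have hwfE : WellFounded (fun a b : Fin d => E a b) :=
    Subrelation.wf (fun {a b} h => Relation.TransGen.single h) hwfT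
  haveI ht3 : IsTrans (Fin d) (fun a b => Relation.TransGen E b a) :=
    ⟨fun _ _ _ hab hbc => hbc.trans hab⟩
  haveI ht4 : IsIrrefl (Fin d) (fun a b => Relation.TransGen E b a) := ⟨hacyc⟩
  have hwfR : WellFounded (fun a b : Fin d => Relation.TransGen E b a) :=
    Finite.wellFounded_of_trans_of_irrefl _
  have hcardS : ∀ m : Fin d,
      (Finset.univ.filter (fun l => π.symm l ≤ m)).card = m.val + 1 := by
    intro m
    have himg : Finset.univ.filter (fun l => π.symm l ≤ m) = (Finset.Iic m).image π := by
      ext l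
      simp only [Finset.mem_filter, Finset.mem_univ, true_and, Finset.mem_image, Finset.mem_Iic]
      constructor
      · intro h; exact ⟨π.symm l, h, by simp⟩
      · rintro ⟨k, hk, rfl⟩; simpa using hk
    rw [himg, Finset.card_image_of_injective _ π.injective, Fin.card_Iic]
  have sink : ∀ m : Fin d,
      (∀ a b, Relation.TransGen E a b → π.symm b ≤ m → π.symm a ≤ m) →
      ∀ l, π.symm l ≤ m → ¬ E (π m) l := by
    intro m hanc l₀ hl₀m hl₀E
    set j : Fin d := π m with hj
    have hjm : π.symm j ≤ m := le_of_eq (by simp [hj])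
    obtain ⟨i, him, hi⟩ := hwfR.has_min {l | π.symm l ≤ m} ⟨j, hjm⟩
    obtain ⟨σ, hσtopo, hσpref⟩ := exists_topo_prefix E hacyc {l | π.symm l ≤ m}
      (fun a b hab hb => hanc a b hab hb) m
      (Finset.univ.filter (fun l => π.symm l ≤ m))
      (fun l => by simp [Finset.mem_filter, Set.mem_setOf_eq]) (hcardS m)
    have hσi : σ.symm i ≤ m := (hσpref i).2 him
    have hσj : σ.symm j ≤ m := (hσpref j).2 hjm
    have hineq := hyp σ hσtopo m i j hσi hσj
      (fun l hl hE => hi l ((hσpref l).1 hl) (Relation.TransGen.single hE))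
      ⟨l₀, (hσpref l₀).2 hl₀m, hl₀E⟩
    have hmax' := hmax m i him
    unfold condMutualInfo at hineq
    set X : Ω → ({l : Fin d // (σ.symm l ≤ m ∧ l ≠ j) ∧ ¬ Relation.TransGen E j l} → A) :=
      fun ω => fun l => V l.1 ω with hX
    set Z : Ω → ({l : Fin d // σ.symm l ≤ m ∧ Relation.TransGen E j l} → A) :=
      fun ω => fun l => V l.1 ω with hZ
    set Uj : Ω → ({l : Fin d // π.symm l ≤ m ∧ l ≠ j} → A) :=
      fun ω => fun l => V l.1 ω with hUj
    set Ui : Ω → ({l : Fin d // π.symm l ≤ m ∧ l ≠ i} → A) :=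
      fun ω => fun l => V l.1 ω with hUi
    -- Step A : condEntropy P X (V j) = entropy P (ε j)
    have hparj : ∀ p : {p : Fin d // E p j},
        (σ.symm p.1 ≤ m ∧ p.1 ≠ j) ∧ ¬ Relation.TransGen E j p.1 := by
      intro p
      have hpm : π.symm p.1 ≤ m := hanc p.1 j (Relation.TransGen.single p.2) hjm
      refine ⟨⟨(hσpref p.1).2 hpm, ?_⟩, ?_⟩
      · intro h
        have hp2 := p.2
        rw [h] at hp2
        exact hacyc j (Relation.TransGen.single hp2)
      · intro h; exact hacyc j (h.tail p.2)
    set gX : ({l : Fin d // (σ.symm l ≤ m ∧ l ≠ j) ∧ ¬ Relation.TransGen E j l} → A) → A :=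
      fun u => f j (fun p => u ⟨p.1, hparj p⟩) with hgX
    have hVj : V j = fun ω => gX (X ω) + ε j ω := by
      funext ω; rw [hV j ω]
    have hXmeas : Measurable X := measurable_pi_lambda _ (fun l => hVmeas l.1)
    have hXind : ProbabilityTheory.IndepFun X (ε j) P := by
      refine indep_tuple E hwfE ε hεmeas hindep f V hV j _ ?_
      intro l hl hrt
      rcases Relation.reflTransGen_iff_eq_or_transGen.1 hrt with h | h
      · exact hl.1.2 h
      · exact hl.2 h
    have eA : condEntropy P X (V j) = entropy P (ε j) := by
      rw [hVj]
      exact condEntropy_shift P X (ε j) gX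
        (fun x => hXmeas (measurableSet_singleton x))
        (fun a => hεmeas j (measurableSet_singleton a))
        (fun x a => hXind.measure_inter_preimage_eq_mul _ _
          (measurableSet_singleton x) (measurableSet_singleton a))
    -- Step B : condEntropy P Ui (V i) = entropy P (ε i)
    have hparbi : ∀ p : {p : Fin d // E p i}, π.symm p.1 ≤ m ∧ p.1 ≠ i := by
      intro p
      refine ⟨hanc p.1 i (Relation.TransGen.single p.2) him, ?_⟩
      intro h
      have hp2 := p.2
      rw [h] at hp2
      exact hacyc i (Relation.TransGen.single hp2)
    set gi : ({l : Fin d // π.symm l ≤ m ∧ l ≠ i} → A) → A :=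
      fun u => f i (fun p => u ⟨p.1, hparbi p⟩) with hgi
    have hVi : V i = fun ω => gi (Ui ω) + ε i ω := by
      funext ω; rw [hV i ω]
    have hUimeas : Measurable Ui := measurable_pi_lambda _ (fun l => hVmeas l.1)
    have hUind : ProbabilityTheory.IndepFun Ui (ε i) P := by
      refine indep_tuple E hwfE ε hεmeas hindep f V hV i _ ?_
      intro l hl hrt
      rcases Relation.reflTransGen_iff_eq_or_transGen.1 hrt with h | h
      · exact hl.2 h
      · exact hi l hl.1 h
    have eB : condEntropy P Ui (V i) = entropy P (ε i) := by
      rw [hVi]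
      exact condEntropy_shift P Ui (ε i) gi
        (fun x => hUimeas (measurableSet_singleton x))
        (fun a => hεmeas i (measurableSet_singleton a))
        (fun x a => hUind.measure_inter_preimage_eq_mul _ _
          (measurableSet_singleton x) (measurableSet_singleton a))
    -- Step C : recoding
    have hDne : ∀ z : Fin d, Relation.TransGen E j z → z ≠ j := by
      intro z hz h
      rw [h] at hz
      exact hacyc j hz
    set φ : ({l : Fin d // π.symm l ≤ m ∧ l ≠ j} → A) →
        (({l : Fin d // (σ.symm l ≤ m ∧ l ≠ j) ∧ ¬ Relation.TransGen E j l} → A) ×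
         ({l : Fin d // σ.symm l ≤ m ∧ Relation.TransGen E j l} → A)) :=
      fun u => (fun w => u ⟨w.1, ⟨(hσpref w.1).1 w.2.1.1, w.2.1.2⟩⟩,
                fun z => u ⟨z.1, ⟨(hσpref z.1).1 z.2.1, hDne z.1 z.2.2⟩⟩)
      with hφ
    have hφinj : Function.Injective φ := by
      intro u u' h
      funext l
      by_cases ht : Relation.TransGen E j l.1
      · have h2 := congrFun (congrArg Prod.snd h) ⟨l.1, ⟨(hσpref l.1).2 l.2.1, ht⟩⟩
        exact h2
      · have h2 := congrFun (congrArg Prod.fst h) ⟨l.1, ⟨⟨(hσpref l.1).2 l.2.1, l.2.2⟩, ht⟩⟩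
        exact h2
    have e3 : condEntropy P (fun ω => (X ω, Z ω)) (V j) = condEntropy P Uj (V j) := by
      unfold condEntropy
      rw [entropy_comp_inj' P (fun ω => (Uj ω, V j ω)) (fun ω => ((X ω, Z ω), V j ω))
          (Prod.map φ id) (hφinj.prodMap Function.injective_id) (fun ω => rfl),
        entropy_comp_inj' P Uj (fun ω => (X ω, Z ω)) φ hφinj (fun ω => rfl)]
    rw [eA, e3] at hineq
    rw [eB] at hmax'
    linarith
  have tclose : ∀ (m : Fin d), (∀ a b, E a b → π.symm b ≤ m → π.symm a ≤ m) →
      ∀ a b, Relation.TransGen E a b → π.symm b ≤ m → π.symm a ≤ m := by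
    intro m hm a b hab
    induction hab with
    | single h => exact hm _ _ h
    | tail _ e ih => exact fun hc => ih (hm _ _ e hc)
  have anc : ∀ n : ℕ, ∀ m : Fin d, d - 1 - m.val ≤ n →
      (∀ a b, Relation.TransGen E a b → π.symm b ≤ m → π.symm a ≤ m) := by
    intro n
    induction n with
    | zero =>
      intro m hm a b _ _
      have h1 : m.val = d - 1 := by have := m.isLt; omega
      have h2 := (π.symm a).isLt
      exact Fin.le_def.2 (by omega)
    | succ n IH =>
      intro m hm
      by_cases hc : d - 1 - m.val ≤ n
      · exact IH m hc
      · have hmval : m.val + 1 < d := by have := m.isLt; omega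
        set m' : Fin d := ⟨m.val + 1, hmval⟩ with hm'
        have hm'val : m'.val = m.val + 1 := rfl
        have hanc' := IH m' (by rw [hm'val]; omega)
        have hsink := sink m' hanc'
        refine tclose m ?_
        intro a b hab hbm
        have hmm' : m ≤ m' := Fin.le_def.2 (by omega)
        have hbm' : π.symm b ≤ m' := le_trans hbm hmm'
        have ham' : π.symm a ≤ m' := hanc' a b (Relation.TransGen.single hab) hbm'
        by_contra hgt
        have hgt2 : m.val < (π.symm a).val := Fin.lt_def.1 (lt_of_not_ge hgt)
        have hle2 : (π.symm a).val ≤ m'.val := Fin.le_def.1 ham'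
        have heq : π.symm a = m' := Fin.ext (by omega)
        have ha : a = π m' := by rw [← heq, Equiv.apply_symm_apply]
        exact hsink b hbm' (ha ▸ hab)
  have hedge : ∀ a b, E a b → π.symm a < π.symm b := by
    intro a b hab
    by_contra hle
    push_neg at hle
    have hsink := sink (π.symm a) (anc d (π.symm a) (by omega)) b hle
    exact hsink (by rwa [Equiv.apply_symm_apply])
  intro a b hab
  induction hab with
  | single h => exact hedge _ _ h
  | tail _ e ih => exact lt_trans ih (hedge _ _ e)
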